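/- arXiv:2402.10795 — 3 statements merged into one kernel-verified Lean document; each statement's English description precedes it below -/
import Mathlib

section
/- Simultaneous update on disjoint groups: let (g₁, h₁) and (g₂, h₂) be two accepted pairs with disjoint groups, each satisfying w_i · (L(D, f | g_i) − L(D, h_i | g_i)) > α. Then the model f'(x) = h₁(x) if g₁(x)=1, else h₂(x) if g₂(x)=1, else f(x), satisfies L(D, f) − L(D, f') > 2α. -/
open MeasureTheory ProbabilityTheory

variable {X : Type*} [MeasurableSpace X]

/-- The set of labeled examples whose features lie in the group `g`. -/
def grpSet (g : X → Bool) : Set (X × ℝ) := {z | g z.1 = true}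

/-- Pointwise squared loss of a predictor on a labeled example. -/
noncomputable def sqLoss (f : X → ℝ) (z : X × ℝ) : ℝ := (f z.1 - z.2) ^ 2

/-- Overall expected squared loss `L(D, f)`. -/
noncomputable def loss (μ : Measure (X × ℝ)) (f : X → ℝ) : ℝ := ∫ z, sqLoss f z ∂μ

/-- Conditional expected squared loss `L(D, f | g)` on the group `g`. -/
noncomputable def closs (μ : Measure (X × ℝ)) (f : X → ℝ) (g : X → Bool) : ℝ :=
  ∫ z, sqLoss f z ∂(μ[|grpSet g])

/-- The weight `w = P[g(x) = 1]` of the group `g`. -/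
noncomputable def weight (μ : Measure (X × ℝ)) (g : X → Bool) : ℝ := (μ (grpSet g)).toReal

lemma grpSet_meas (g : X → Bool) (hg : Measurable g) : MeasurableSet (grpSet g) := by
  have : grpSet g = Prod.fst ⁻¹' (g ⁻¹' {true}) := rfl
  rw [this]
  exact measurable_fst (hg (by trivial))

lemma weight_mul_closs (μ : Measure (X × ℝ)) [IsProbabilityMeasure μ]
    (f : X → ℝ) (g : X → Bool) (hw : 0 < weight μ g) :
    weight μ g * closs μ f g = ∫ z in grpSet g, sqLoss f z ∂μ := by
  have hne : μ (grpSet g) ≠ 0 := by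
    intro h
    simp [weight, h] at hw
  rw [closs, ProbabilityTheory.cond, integral_smul_measure, ENNReal.toReal_inv]
  rw [weight, smul_eq_mul, ← mul_assoc, mul_inv_cancel₀ (by
    simpa [weight] using hw.ne'), one_mul]

/-- simultaneously applying two accepted pairs with disjoint groups
decreases the overall loss by more than `2α`. -/
theorem simultaneous_disjoint_update
    (μ : Measure (X × ℝ)) [IsProbabilityMeasure μ]
    (f h₁ h₂ : X → ℝ) (g₁ g₂ : X → Bool) (α : ℝ)
    (hdisj : ∀ x, g₁ x = true → g₂ x = false)
    (hw1 : 0 < weight μ g₁) (hw2 : 0 < weight μ g₂)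
    (hf : Measurable f) (hh1 : Measurable h₁) (hh2 : Measurable h₂)
    (hg1 : Measurable g₁) (hg2 : Measurable g₂)
    (hintf : Integrable (sqLoss f) μ)
    (hintf' : Integrable
      (sqLoss (fun x => if g₁ x then h₁ x else if g₂ x then h₂ x else f x)) μ)
    (hacc1 : weight μ g₁ * (closs μ f g₁ - closs μ h₁ g₁) > α)
    (hacc2 : weight μ g₂ * (closs μ f g₂ - closs μ h₂ g₂) > α) :
    loss μ f
      - loss μ (fun x => if g₁ x then h₁ x else if g₂ x then h₂ x else f x)
      > 2 * α := by
  set f' : X → ℝ := fun x => if g₁ x then h₁ x else if g₂ x then h₂ x else f x with hf'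
  set S₁ := grpSet g₁
  set S₂ := grpSet g₂
  have hS₁ : MeasurableSet S₁ := grpSet_meas g₁ hg1
  have hS₂ : MeasurableSet S₂ := grpSet_meas g₂ hg2
  have hdS : Disjoint S₁ S₂ := by
    rw [Set.disjoint_left]
    intro z h1 h2
    have h1' : g₁ z.1 = true := h1
    have := hdisj z.1 h1'
    exact absurd (show g₂ z.1 = true from h2) (by simp [this])
  -- f' agrees with h₁ on S₁, h₂ on S₂, f elsewhere
  have heq1 : ∀ z ∈ S₁, sqLoss f' z = sqLoss h₁ z := by
    intro z hz
    simp only [sqLoss, hf']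
    simp [show g₁ z.1 = true from hz]
  have heq2 : ∀ z ∈ S₂, sqLoss f' z = sqLoss h₂ z := by
    intro z hz
    have hg1z : g₁ z.1 = false := by
      by_contra h
      have := hdisj z.1 (by simpa using Bool.eq_true_of_not_eq_false h)
      exact absurd hz (by simp [S₂, grpSet, this])
    simp only [sqLoss, hf']
    simp [show g₂ z.1 = true from hz, hg1z]
  -- integral on S₁ of h₁ equals that of f'
  have hI1 : ∫ z in S₁, sqLoss h₁ z ∂μ = ∫ z in S₁, sqLoss f' z ∂μ :=
    (setIntegral_congr_fun hS₁ fun z hz => (heq1 z hz).symm)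
  have hI2 : ∫ z in S₂, sqLoss h₂ z ∂μ = ∫ z in S₂, sqLoss f' z ∂μ :=
    (setIntegral_congr_fun hS₂ fun z hz => (heq2 z hz).symm)
  have hA1 : weight μ g₁ * (closs μ f g₁ - closs μ h₁ g₁)
      = ∫ z in S₁, sqLoss f z ∂μ - ∫ z in S₁, sqLoss f' z ∂μ := by
    rw [mul_sub, weight_mul_closs μ f g₁ hw1, weight_mul_closs μ h₁ g₁ hw1, hI1]
  have hA2 : weight μ g₂ * (closs μ f g₂ - closs μ h₂ g₂)
      = ∫ z in S₂, sqLoss f z ∂μ - ∫ z in S₂, sqLoss f' z ∂μ := by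
    rw [mul_sub, weight_mul_closs μ f g₂ hw2, weight_mul_closs μ h₂ g₂ hw2, hI2]
  -- decomposition of the loss difference
  have hDiff : loss μ f - loss μ f'
      = (∫ z in S₁, sqLoss f z ∂μ - ∫ z in S₁, sqLoss f' z ∂μ)
        + (∫ z in S₂, sqLoss f z ∂μ - ∫ z in S₂, sqLoss f' z ∂μ) := by
    have hsub : loss μ f - loss μ f' = ∫ z, (sqLoss f z - sqLoss f' z) ∂μ := by
      rw [loss, loss, integral_sub hintf hintf']
    have hzero : ∀ z ∉ S₁ ∪ S₂, sqLoss f z - sqLoss f' z = 0 := by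
      intro z hz
      rw [Set.mem_union] at hz
      push_neg at hz
      have h1 : g₁ z.1 = false := by
        by_contra h
        exact hz.1 (by simpa [S₁, grpSet] using Bool.eq_true_of_not_eq_false h)
      have h2 : g₂ z.1 = false := by
        by_contra h
        exact hz.2 (by simpa [S₂, grpSet] using Bool.eq_true_of_not_eq_false h)
      simp [sqLoss, hf', h1, h2]
    have hi1 : IntegrableOn (fun z => sqLoss f z - sqLoss f' z) S₁ μ :=
      hintf.integrableOn.sub hintf'.integrableOn
    have hi2 : IntegrableOn (fun z => sqLoss f z - sqLoss f' z) S₂ μ :=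
      hintf.integrableOn.sub hintf'.integrableOn
    rw [hsub, ← setIntegral_eq_integral_of_forall_compl_eq_zero hzero,
      setIntegral_union hdS hS₂ hi1 hi2,
      integral_sub hintf.integrableOn hintf'.integrableOn,
      integral_sub hintf.integrableOn hintf'.integrableOn]
  rw [hDiff]
  rw [← hA1, ← hA2]
  linarith
end

section
/- An update (g, h) accepted at threshold α can increase loss on a subgroup: there exist a finite distribution D, model f, predictor h, groups g and g' with g'(x) = 1 implying g(x) = 1, such that w · (L(D, f | g) − L(D, h | g)) > α (so the update is accepted and overall loss decreases), yet L(D, f' | g') > L(D, f | g') for the updated model f'. (This is why the repair procedure is needed.) -/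
open MeasureTheory ProbabilityTheory

variable {X : Type*} [MeasurableSpace X]

open scoped ENNReal

noncomputable def myμ : Measure (ℕ × ℝ) :=
  (1/2 : ℝ≥0∞) • Measure.dirac ((0:ℕ),(0:ℝ)) + (1/2 : ℝ≥0∞) • Measure.dirac ((1:ℕ),(0:ℝ))

lemma myμ_prob : IsProbabilityMeasure myμ := by
  constructor
  simp [myμ]
  rw [ENNReal.inv_two_add_inv_two]

lemma intg {f : ℕ × ℝ → ℝ} (hf : Measurable f) (a : ℕ × ℝ) (c : ℝ≥0∞) (hc : c ≠ ⊤) :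
    Integrable f (c • Measure.dirac a) := by
  refine Integrable.smul_measure ⟨hf.aestronglyMeasurable, ?_⟩ hc
  rw [HasFiniteIntegral, lintegral_dirac]
  exact ENNReal.coe_lt_top

lemma myμ_integral {f : ℕ × ℝ → ℝ} (hf : Measurable f) :
    ∫ z, f z ∂myμ = (f (0,0) + f (1,0)) / 2 := by
  rw [myμ, integral_add_measure (intg hf _ _ (by norm_num)) (intg hf _ _ (by norm_num)),
    integral_smul_measure, integral_smul_measure, integral_dirac, integral_dirac]
  norm_num; ring

lemma meas_grp (g : ℕ → Bool) : MeasurableSet (grpSet g) := by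
  have : grpSet g = Prod.fst ⁻¹' {x | g x = true} := rfl
  rw [this]
  exact measurable_fst .of_discrete

lemma grp_univ : grpSet (fun _ : ℕ => true) = Set.univ := by
  ext z; simp [grpSet]

def g0 : ℕ → Bool := fun x => decide (x = 0)

lemma grp_g0 : grpSet g0 = Prod.fst ⁻¹' ({0} : Set ℕ) := by
  ext z; simp [grpSet, g0]

lemma myμ_g0 : myμ (grpSet g0) = 1/2 := by
  rw [grp_g0, myμ]
  simp [Measure.dirac_apply' _ (measurable_fst (measurableSet_singleton (0:ℕ)))]

lemma cond_g0 : myμ[|grpSet g0] = Measure.dirac ((0:ℕ),(0:ℝ)) := by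
  classical
  have h1 : ((0:ℕ),(0:ℝ)) ∈ grpSet g0 := by simp [grpSet, g0]
  have h2 : ((1:ℕ),(0:ℝ)) ∉ grpSet g0 := by simp [grpSet, g0]
  rw [ProbabilityTheory.cond, myμ_g0, myμ, Measure.restrict_add,
    Measure.restrict_smul, Measure.restrict_smul,
    MeasureTheory.restrict_dirac' (meas_grp g0),
    MeasureTheory.restrict_dirac' (meas_grp g0), if_pos h1, if_neg h2]
  rw [smul_zero, add_zero, smul_smul]
  norm_num
  rw [ENNReal.mul_inv_cancel (by norm_num) (by norm_num), one_smul]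

lemma meas_sqLoss (f : ℕ → ℝ) : Measurable (sqLoss f) := by
  have hf : Measurable f := .of_discrete
  exact ((hf.comp measurable_fst).sub measurable_snd).pow_const 2

/-- an accepted update can increase loss on a subgroup: there is a finitely
supported distribution, a model, an accepted `(g, h)` pair (decreasing overall loss),
and a subgroup `g' ⊆ g` on which the updated model is strictly worse. -/
theorem accepted_update_can_hurt_subgroup :
    ∃ (μ : Measure (ℕ × ℝ)) (_ : IsProbabilityMeasure μ)
      (f h : ℕ → ℝ) (g g' : ℕ → Bool) (α : ℝ),
      0 < α
      ∧ (∃ s : Finset (ℕ × ℝ), μ (↑s)ᶜ = 0)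
      ∧ (∀ x, g' x = true → g x = true)
      ∧ 0 < weight μ g ∧ 0 < weight μ g'
      ∧ weight μ g * (closs μ f g - closs μ h g) > α
      ∧ loss μ (fun x => if g x then h x else f x) < loss μ f
      ∧ closs μ (fun x => if g x then h x else f x) g' > closs μ f g' := by
  classical
  have hprob := myμ_prob
  set F : ℕ → ℝ := fun x => if x = 0 then 1 else 3 with hF
  set H : ℕ → ℝ := fun x => if x = 0 then 2 else 0 with hH
  refine ⟨myμ, myμ_prob, F, H, (fun _ => true), g0, 1, one_pos,
    ⟨{((0:ℕ),(0:ℝ)), ((1:ℕ),(0:ℝ))}, ?_⟩, fun x _ => rfl, ?_, ?_, ?_, ?_, ?_⟩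
  · rw [myμ]
    simp only [Measure.add_apply, Measure.smul_apply, smul_eq_mul]
    rw [Measure.dirac_apply' _ (by exact (Finset.measurableSet _).compl),
        Measure.dirac_apply' _ (by exact (Finset.measurableSet _).compl)]
    have h1 : ((0:ℕ),(0:ℝ)) ∈ (({((0:ℕ),(0:ℝ)), ((1:ℕ),(0:ℝ))} : Finset (ℕ × ℝ)) : Set (ℕ × ℝ)) := by simp
    have h2 : ((1:ℕ),(0:ℝ)) ∈ (({((0:ℕ),(0:ℝ)), ((1:ℕ),(0:ℝ))} : Finset (ℕ × ℝ)) : Set (ℕ × ℝ)) := by simp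
    rw [Set.indicator_of_notMem (by simpa using h1), Set.indicator_of_notMem (by simpa using h2)]
    simp
  · rw [weight, grp_univ]
    simp
  · rw [weight, myμ_g0]
    norm_num
  · have hupdate : weight myμ (fun _ => true) = 1 := by
      rw [weight, grp_univ]; simp
    have hcF : closs myμ F (fun _ => true) = 5 := by
      rw [closs, grp_univ, cond_univ, myμ_integral (meas_sqLoss F)]
      norm_num [sqLoss, hF]
    have hcH : closs myμ H (fun _ => true) = 2 := by
      rw [closs, grp_univ, cond_univ, myμ_integral (meas_sqLoss H)]
      norm_num [sqLoss, hH]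
    rw [hupdate, hcF, hcH]
    norm_num
  · have he : (fun x => if (fun _ : ℕ => true) x then H x else F x) = H := by
      funext x; simp
    rw [he, loss, loss, myμ_integral (meas_sqLoss H), myμ_integral (meas_sqLoss F)]
    norm_num [sqLoss, hF, hH]
  · have he : (fun x => if (fun _ : ℕ => true) x then H x else F x) = H := by
      funext x; simp
    rw [he, closs, closs, cond_g0, integral_dirac, integral_dirac]
    norm_num [sqLoss, hF, hH]
end

section
/- ε-approximate Bayes optimality at termination: suppose the bias-bounty process terminates in the sense that no pair (g, h) from a class where g ranges over all measurable indicators and h over all measurable predictors satisfies w · (L(D, f | g) − L(D, h | g)) > α. Then for every group g with weight w ≥ α / ε (for any ε > 0), the conditional loss of f on g exceeds the Bayes optimal conditional loss on g by at most ε: L(D, f | g) − L(D, f* | g) ≤ ε, where f*(x) = E[y | x]. -/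
open MeasureTheory ProbabilityTheory

variable {X : Type*} [MeasurableSpace X]

/-- ε-approximate Bayes optimality at termination: if no `(g, h)` pair has
weighted improvement over `f` exceeding `α`, then on every group of weight at least
`α / ε` the conditional loss of `f` is within `ε` of that of the Bayes optimal
predictor `f*(x) = E[y | x]`. -/
theorem termination_implies_approx_bayes_optimal
    (μ : Measure (X × ℝ)) [IsProbabilityMeasure μ]
    (f fstar : X → ℝ) (α ε : ℝ) (hα : 0 < α) (hε : 0 < ε)
    (hfm : Measurable fstar) (hf : Measurable f)
    (hy2 : Integrable (fun z : X × ℝ => z.2 ^ 2) μ)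
    (hintf : Integrable (sqLoss f) μ) (hintfs : Integrable (sqLoss fstar) μ)
    (hfstar : (fun z : X × ℝ => fstar z.1)
      =ᵐ[μ] μ[(fun z : X × ℝ => z.2) | MeasurableSpace.comap Prod.fst inferInstance])
    (hterm : ∀ (g : X → Bool) (h : X → ℝ),
      ¬ (weight μ g * (closs μ f g - closs μ h g) > α)) :
    ∀ g : X → Bool, weight μ g ≥ α / ε →
      closs μ f g - closs μ fstar g ≤ ε := by
  intro g hg
  have hw : 0 < weight μ g := lt_of_lt_of_le (div_pos hα hε) hg
  have h1 := hterm g fstar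
  push_neg at h1
  have h2 : α ≤ weight μ g * ε := by
    rw [ge_iff_le, div_le_iff₀ hε] at hg
    linarith
  nlinarith
end
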